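/- Let k be an algebraically closed field and J ⊆ k[z₁,…,z_s] a radical zero-dimensional ideal whose variety has n_s points. Then there exists a linear form ℓ ∈ k[z₁,…,z_s] that separates the points of the variety, and the images of 1, ℓ, ℓ², …, ℓ^{n_s−1} form a k-basis of k[z₁,…,z_s]/J; in particular every residue class admits a univariate representation of degree at most n_s − 1. -/

import Mathlib

open MvPolynomial

/-- Univariate representation at a maximum cut: over an algebraically closed field, if
`J` is a radical ideal whose zero set `V` consists of exactly `ns` distinct points, then
there is a linear form `ℓ` separating the points of `V` such that the classes of
`1, ℓ, ℓ², …, ℓ^{ns−1}` form a `k`-basis of `k[z₁,…,z_s]/J`; in particular every residue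
class admits a univariate representation of degree at most `ns − 1`. -/
theorem exists_separating_linear_form_powers_basis
    {k : Type*} [Field k] [IsAlgClosed k] {s ns : ℕ}
    (J : Ideal (MvPolynomial (Fin s) k)) (hrad : J.IsRadical)
    (V : Set (Fin s → k))
    (hV : V = {z : Fin s → k | ∀ p ∈ J, MvPolynomial.eval z p = 0})
    (hfin : V.Finite) (hcard : V.ncard = ns) :
    ∃ ℓ : MvPolynomial (Fin s) k,
      (∃ c : Fin s → k, ℓ = ∑ i, MvPolynomial.C (c i) * MvPolynomial.X i) ∧
      Set.InjOn (fun z => MvPolynomial.eval z ℓ) V ∧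
      LinearIndependent k
        (fun i : Fin ns => Ideal.Quotient.mk J (ℓ ^ (i : ℕ))) ∧
      Submodule.span k
        (Set.range (fun i : Fin ns => Ideal.Quotient.mk J (ℓ ^ (i : ℕ)))) = ⊤ := by
  classical
  haveI : Fintype V := hfin.fintype
  -- The Nullstellensatz: `J` is the vanishing ideal of `V`.
  have hVz : V = zeroLocus k J := by rw [hV]; rfl
  have hJ : vanishingIdeal k V = J := by
    rw [hVz, vanishingIdeal_zeroLocus_eq_radical, hrad.radical]
  have hmem : ∀ p : MvPolynomial (Fin s) k, p ∈ J ↔ ∀ z ∈ V, eval z p = 0 := by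
    intro p
    rw [← hJ, mem_vanishingIdeal_iff]
    exact Iff.rfl
  -- Existence of a separating linear form, via a nonvanishing polynomial in the
  -- coefficients `c`.
  obtain ⟨c, hc⟩ :
      ∃ c : Fin s → k, ∀ v ∈ V, ∀ w ∈ V, v ≠ w →
        eval c (∑ i, MvPolynomial.C (v i - w i) * MvPolynomial.X i) ≠ 0 := by
    set P : (Fin s → k) → (Fin s → k) → MvPolynomial (Fin s) k :=
      fun v w => ∑ i, MvPolynomial.C (v i - w i) * MvPolynomial.X i with hP
    set T : Finset ((Fin s → k) × (Fin s → k)) :=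
      (hfin.toFinset ×ˢ hfin.toFinset).filter (fun p => p.1 ≠ p.2) with hT
    have hPne : ∀ p ∈ T, P p.1 p.2 ≠ 0 := by
      rintro ⟨v, w⟩ hp
      simp only [hT, Finset.mem_filter] at hp
      obtain ⟨i, hi⟩ := Function.ne_iff.mp hp.2
      intro h0
      have := congrArg (fun q => MvPolynomial.coeff (Finsupp.single i 1) q) h0
      simp only [hP, MvPolynomial.coeff_sum, MvPolynomial.coeff_C_mul,
        MvPolynomial.coeff_X', MvPolynomial.coeff_zero] at this
      rw [Finset.sum_eq_single i] at this
      · simp at this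
        exact hi (sub_eq_zero.mp this)
      · intro j _ hj
        simp [Finsupp.single_eq_single_iff, hj]
      · simp
    have hFne : (∏ p ∈ T, P p.1 p.2) ≠ 0 := Finset.prod_ne_zero_iff.mpr hPne
    have : ∃ c : Fin s → k, eval c (∏ p ∈ T, P p.1 p.2) ≠ 0 := by
      by_contra h
      push_neg at h
      exact hFne (MvPolynomial.funext (fun x => by simp [h x]))
    obtain ⟨c, hc⟩ := this
    refine ⟨c, fun v hv w hw hvw => ?_⟩
    have hmemT : (v, w) ∈ T := by
      simp [hT, Set.Finite.mem_toFinset, hv, hw, hvw]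
    rw [map_prod] at hc
    exact Finset.prod_ne_zero_iff.mp hc (v, w) hmemT
  set ℓ : MvPolynomial (Fin s) k := ∑ i, MvPolynomial.C (c i) * MvPolynomial.X i with hℓ
  have hevalℓ : ∀ z : Fin s → k, eval z ℓ = ∑ i, c i * z i := by
    intro z; simp [hℓ]
  have hinj : Set.InjOn (fun z => MvPolynomial.eval z ℓ) V := by
    intro v hv w hw h
    by_contra hvw
    apply hc v hv w hw hvw
    have h' : eval v ℓ = eval w ℓ := h
    have h2 : eval v ℓ - eval w ℓ = 0 := by rw [h']; ring
    rw [hevalℓ, hevalℓ, ← Finset.sum_sub_distrib] at h2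
    have h3 : eval c (∑ i, MvPolynomial.C (v i - w i) * MvPolynomial.X i)
        = ∑ i, (c i * v i - c i * w i) := by
      simp [sub_mul, mul_sub, mul_comm]
    rw [h3]
    simpa [mul_sub] using h2
  -- The evaluation map from the quotient into functions on `V`.
  set ev : MvPolynomial (Fin s) k →ₐ[k] (V → k) :=
    Pi.algHom k _ (fun v => MvPolynomial.aeval (v : Fin s → k)) with hev
  have haev : ∀ (v : Fin s → k) (p : MvPolynomial (Fin s) k),
      MvPolynomial.aeval v p = eval v p := by
    intro v p
    rw [MvPolynomial.aeval_def, Algebra.algebraMap_self]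
    rfl
  have hevJ : ∀ p ∈ J, ev p = 0 := by
    intro p hp
    funext v
    have h1 := (hmem p).mp hp v v.2
    show MvPolynomial.aeval (v : Fin s → k) p = 0
    rw [haev]
    exact h1
  set φ : (MvPolynomial (Fin s) k ⧸ J) →ₐ[k] (V → k) := Ideal.Quotient.liftₐ J ev hevJ
    with hφ
  have hφmk : ∀ (p : MvPolynomial (Fin s) k) (v : V),
      φ (Ideal.Quotient.mk J p) v = eval (v : Fin s → k) p := by
    intro p v
    show (Ideal.Quotient.liftₐ J ev hevJ) (Ideal.Quotient.mk J p) v = _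
    rw [Ideal.Quotient.liftₐ_apply]
    exact haev _ _
  have hφinj : Function.Injective φ.toLinearMap := by
    rw [injective_iff_map_eq_zero]
    intro a ha
    obtain ⟨p, rfl⟩ := Ideal.Quotient.mk_surjective a
    rw [Ideal.Quotient.eq_zero_iff_mem, hmem]
    intro z hz
    have h2 : φ (Ideal.Quotient.mk J p) ⟨z, hz⟩ = 0 := congrFun ha ⟨z, hz⟩
    rwa [hφmk] at h2
  haveI : FiniteDimensional k (MvPolynomial (Fin s) k ⧸ J) :=
    FiniteDimensional.of_injective φ.toLinearMap hφinj
  have hcardV : Fintype.card V = ns := by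
    rw [← hcard, Set.ncard_eq_toFinset_card', Set.toFinset_card]
  -- the restricted evaluation of ℓ is injective on V
  set μ : V → k := fun v => eval (v : Fin s → k) ℓ with hμ
  have hμinj : Function.Injective μ := fun v w h =>
    Subtype.ext (hinj v.2 w.2 h)
  -- Linear independence of the powers of ℓ in the quotient.
  have hli : LinearIndependent k
      (fun i : Fin ns => Ideal.Quotient.mk J (ℓ ^ (i : ℕ))) := by
    apply LinearIndependent.of_comp φ.toLinearMap
    rw [Fintype.linearIndependent_iff]
    intro g hg i
    set q : Polynomial k := ∑ j : Fin ns, Polynomial.C (g j) * Polynomial.X ^ (j : ℕ)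
      with hq
    have hqeval : ∀ v : V, q.eval (μ v) = 0 := by
      intro v
      have := congrFun hg v
      simp only [Function.comp_apply, Finset.sum_apply, Pi.smul_apply, smul_eq_mul,
        Pi.zero_apply] at this
      rw [hq]
      simp only [Polynomial.eval_finset_sum, Polynomial.eval_mul, Polynomial.eval_C,
        Polynomial.eval_pow, Polynomial.eval_X]
      rw [← this]
      apply Finset.sum_congr rfl
      intro j _
      have h4 : (φ.toLinearMap ∘ fun i : Fin ns => Ideal.Quotient.mk J (ℓ ^ (i : ℕ))) j v
          = μ v ^ (j : ℕ) := by
        show φ (Ideal.Quotient.mk J (ℓ ^ (j : ℕ))) v = _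
        rw [hφmk]
        simp [hμ, map_pow]
      rw [← h4]
      rfl
    have hqdeg : q.natDegree < ns := by
      have : q.natDegree ≤ ns - 1 := by
        apply Polynomial.natDegree_sum_le_of_forall_le
        intro j _
        apply le_trans (Polynomial.natDegree_C_mul_le _ _)
        rw [Polynomial.natDegree_X_pow]
        omega
      have hns : 0 < ns := i.pos
      omega
    have hq0 : q = 0 := by
      apply Polynomial.eq_zero_of_natDegree_lt_card_of_eval_eq_zero q hμinj hqeval
      rwa [hcardV]
    have := congrArg (fun r => Polynomial.coeff r (i : ℕ)) hq0
    simp only [hq, Polynomial.finset_sum_coeff, Polynomial.coeff_C_mul,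
      Polynomial.coeff_X_pow, Polynomial.coeff_zero] at this
    rw [Finset.sum_eq_single i] at this
    · simpa using this
    · intro j _ hj
      have hne : (i : ℕ) ≠ (j : ℕ) := fun h => hj (Fin.ext h.symm)
      simp [hne]
    · simp
  -- Dimension count: the quotient has dimension exactly ns.
  have hle : Module.finrank k (MvPolynomial (Fin s) k ⧸ J) ≤ ns := by
    have := LinearMap.finrank_le_finrank_of_injective hφinj
    rwa [Module.finrank_pi, hcardV] at this
  have hge : ns ≤ Module.finrank k (MvPolynomial (Fin s) k ⧸ J) := by
    have := hli.fintype_card_le_finrank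
    rwa [Fintype.card_fin] at this
  have hrank : Fintype.card (Fin ns) = Module.finrank k (MvPolynomial (Fin s) k ⧸ J) := by
    rw [Fintype.card_fin]; omega
  exact ⟨ℓ, ⟨c, rfl⟩, hinj, hli, hli.span_eq_top_of_card_eq_finrank' hrank⟩
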